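/- Let 0 < δ < 1, let n = ⌈4/δ²⌉, let ε = (ln n)/n, and consider n+1 coins, one with heads-probability 1 and n with heads-probability 1 − ε. Let b be the ordering that places the probability-1 coin first (followed by the n coins of probability 1 − ε), and let a be the ordering that places the probability-1 coin last. Then cost(b) − cost(a) > 1 − δ. (Here b is the ordering produced by the greedy algorithm on this instance, so the greedy ordering can cost nearly 1 more than optimal.) -/

import Mathlib

open Finset

/-- The cost of an ordering `c` of `m` coins with heads-probabilities `q`:
`cost = 2 + Σ_{j=3}^{m} (∏_{i=1}^{j-1} q_{c(i)} + ∏_{i=1}^{j-1} (1 - q_{c(i)}))`. -/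
noncomputable def cost (m : ℕ) (q : ℕ → ℝ) (c : ℕ → ℕ) : ℝ :=
  2 + ∑ j ∈ Finset.Icc 3 m,
    (∏ i ∈ Finset.Ico 1 j, q (c i) + ∏ i ∈ Finset.Ico 1 j, (1 - q (c i)))

set_option maxHeartbeats 1000000 in
/-- For `0 < δ < 1`, `n = ⌈4/δ²⌉`, `ε = (ln n)/n`, and an instance of `n+1`
coins — one with heads-probability `1` and `n` with heads-probability `1-ε` —
the ordering `b` placing the probability-1 coin first costs more than `1 - δ`
plus the cost of the ordering `a` placing the probability-1 coin last. -/
theorem greedy_minus_opt_at_least (δ : ℝ) (hδ0 : 0 < δ) (hδ1 : δ < 1)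
    (n : ℕ) (hn : n = ⌈(4 : ℝ) / δ ^ 2⌉₊)
    (ε : ℝ) (hε : ε = Real.log n / n)
    (q : ℕ → ℝ) (hq1 : q 1 = 1)
    (hq : ∀ i, 2 ≤ i → i ≤ n + 1 → q i = 1 - ε)
    (b : ℕ → ℕ) (hb : ∀ i, b i = i)
    (a : ℕ → ℕ) (ha : ∀ i, 1 ≤ i → i ≤ n → a i = i + 1) (han : a (n + 1) = 1) :
    cost (n + 1) q b - cost (n + 1) q a > 1 - δ := by
  -- basic facts about n
  have hδ2 : (0:ℝ) < δ ^ 2 := by positivity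
  have hceil : (4:ℝ) / δ ^ 2 ≤ n := by rw [hn]; exact Nat.le_ceil _
  have h4lt : (4:ℝ) < 4 / δ ^ 2 := by
    rw [lt_div_iff₀ hδ2]; nlinarith
  have hn5 : 5 ≤ n := by
    by_contra h
    push_neg at h
    interval_cases n <;> norm_num at hceil <;> linarith
  have hn0 : (0:ℝ) < n := by positivity
  have hn5R : (5:ℝ) ≤ n := by exact_mod_cast hn5
  set s : ℝ := Real.sqrt n with hs
  have hs0 : 0 < s := Real.sqrt_pos.2 hn0
  have hs2 : s ^ 2 = n := Real.sq_sqrt (le_of_lt hn0)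
  have hs22 : (2.236:ℝ) ≤ s := by
    rw [hs]
    rw [show (2.236:ℝ) = Real.sqrt (2.236^2) from (Real.sqrt_sq (by norm_num)).symm]
    apply Real.sqrt_le_sqrt; nlinarith
  have he : (2.718:ℝ) < Real.exp 1 := by
    have := Real.exp_one_gt_d9; linarith
  -- ε bounds
  have hlogs : Real.log s ≤ s / Real.exp 1 := by
    have h1 : Real.log (s / Real.exp 1) ≤ s / Real.exp 1 - 1 :=
      Real.log_le_sub_one_of_pos (by positivity)
    rw [Real.log_div (ne_of_gt hs0) (by positivity), Real.log_exp] at h1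
    linarith
  have hlogn : Real.log n = 2 * Real.log s := by
    rw [hs, Real.log_sqrt (le_of_lt hn0)]; ring
  have hεle : ε ≤ 2 / (Real.exp 1 * s) := by
    rw [hε, hlogn]
    rw [div_le_div_iff₀ hn0 (by positivity)]
    have : Real.log s * (Real.exp 1 * s) ≤ s / Real.exp 1 * (Real.exp 1 * s) := by
      apply mul_le_mul_of_nonneg_right hlogs; positivity
    have he0 : (0:ℝ) < Real.exp 1 := Real.exp_pos 1
    calc 2 * Real.log s * (Real.exp 1 * s) ≤ 2 * (s / Real.exp 1 * (Real.exp 1 * s)) := by linarith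
      _ = 2 * s ^ 2 := by field_simp
      _ = 2 * n := by rw [hs2]
  have hε0 : 0 ≤ ε := by
    rw [hε]
    apply div_nonneg _ (le_of_lt hn0)
    apply Real.log_nonneg; linarith
  have hε3 : ε < 1/3 := by
    have : 2 / (Real.exp 1 * s) < 1/3 := by
      rw [div_lt_div_iff₀ (by positivity) (by norm_num)]
      nlinarith
    linarith
  -- (1-ε)^n ≤ 1/n
  have hpow : (1 - ε) ^ n ≤ 1 / n := by
    have h1 : 1 - ε ≤ Real.exp (-ε) := by
      have := Real.add_one_le_exp (-ε); linarith
    have h2 : (1 - ε) ^ n ≤ Real.exp (-ε) ^ n :=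
      pow_le_pow_left₀ (by linarith) h1 n
    rw [← Real.exp_nat_mul] at h2
    have h3 : (n:ℝ) * (-ε) = - Real.log n := by
      rw [hε]; field_simp
    rw [h3, Real.exp_neg, Real.exp_log hn0] at h2
    rw [one_div]; exact h2
  -- δ ≥ 2 / s
  have hδs : 2 / s ≤ δ := by
    have h4 : 4 ≤ δ^2 * s^2 := by
      rw [hs2]
      rw [div_le_iff₀ hδ2] at hceil
      linarith
    rw [div_le_iff₀ hs0]
    nlinarith [mul_pos hδ0 hs0]
  -- cost b
  have hIcc : Finset.Icc 3 (n+1) = Finset.Ico 3 (n+2) := by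
    rw [← Finset.Ico_add_one_right_eq_Icc]; rfl
  have hcostb : cost (n+1) q b = 2 + ∑ j ∈ Finset.Icc 3 (n+1), (1-ε)^(j-2) := by
    unfold cost
    congr 1
    apply Finset.sum_congr rfl
    intro j hj
    simp only [Finset.mem_Icc] at hj
    have h1mem : 1 ∈ Finset.Ico 1 j := by simp; omega
    have hP : ∏ i ∈ Finset.Ico 1 j, q (b i) = (1-ε)^(j-2) := by
      rw [← Finset.mul_prod_erase _ _ h1mem, Finset.Ico_erase_left, hb 1, hq1, one_mul]
      rw [Finset.prod_eq_pow_card (b := 1-ε) (fun i hi => by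
        have h := Finset.mem_Ioo.1 hi
        rw [hb]; exact hq i h.1 (by omega)), Nat.card_Ioo]
      congr 1 <;> omega
    have hN : ∏ i ∈ Finset.Ico 1 j, (1 - q (b i)) = 0 := by
      apply Finset.prod_eq_zero h1mem
      rw [hb, hq1]; ring
    rw [hP, hN, add_zero]
  -- cost a
  have hcosta : cost (n+1) q a = 2 + ∑ j ∈ Finset.Icc 3 (n+1), ((1-ε)^(j-1) + ε^(j-1)) := by
    unfold cost
    congr 1
    apply Finset.sum_congr rfl
    intro j hj
    simp only [Finset.mem_Icc] at hj
    have hqa : ∀ i ∈ Finset.Ico 1 j, q (a i) = 1 - ε := by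
      intro i hi
      simp only [Finset.mem_Ico] at hi
      rw [ha i hi.1 (by omega)]
      exact hq (i+1) (by omega) (by omega)
    rw [Finset.prod_eq_pow_card (b := 1-ε) hqa,
      Finset.prod_eq_pow_card (b := ε) (fun i hi => by rw [hqa i hi]; ring),
      Nat.card_Ico]
  rw [hcostb, hcosta]
  have hdiff : (2 + ∑ j ∈ Finset.Icc 3 (n+1), (1-ε)^(j-2))
      - (2 + ∑ j ∈ Finset.Icc 3 (n+1), ((1-ε)^(j-1) + ε^(j-1)))
      = ((1-ε) - (1-ε)^n) - ∑ i ∈ Finset.range (n-1), ε^(i+2) := by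
    have : (2 + ∑ j ∈ Finset.Icc 3 (n+1), (1-ε)^(j-2))
        - (2 + ∑ j ∈ Finset.Icc 3 (n+1), ((1-ε)^(j-1) + ε^(j-1)))
        = ∑ j ∈ Finset.Icc 3 (n+1), ((1-ε)^(j-2) - (1-ε)^(j-1) - ε^(j-1)) := by
      rw [Finset.sum_sub_distrib, Finset.sum_sub_distrib, Finset.sum_add_distrib]
      ring
    rw [this, hIcc, Finset.sum_Ico_eq_sum_range]
    have hcard : n + 2 - 3 = n - 1 := by omega
    rw [hcard]
    have hterm : ∀ i ∈ Finset.range (n-1),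
        (1-ε)^(3+i-2) - (1-ε)^(3+i-1) - ε^(3+i-1)
        = ((1-ε)^(i+1) - (1-ε)^(i+1+1)) - ε^(i+2) := by
      intro i _
      have h1 : 3 + i - 2 = i + 1 := by omega
      have h2 : 3 + i - 1 = i + 2 := by omega
      rw [h1, h2]
    rw [Finset.sum_congr rfl hterm, Finset.sum_sub_distrib]
    rw [Finset.sum_range_sub' (fun i => (1-ε)^(i+1)) (n-1)]
    have : n - 1 + 1 = n := by omega
    rw [this]
    norm_num
  rw [hdiff]
  -- bound the epsilon sum
  have hsum : ∑ i ∈ Finset.range (n-1), ε^(i+2) ≤ ε^2 * (3/2) := by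
    have heq : ∑ i ∈ Finset.range (n-1), ε^(i+2) = ε^2 * ∑ i ∈ Finset.range (n-1), ε^i := by
      rw [Finset.mul_sum]
      apply Finset.sum_congr rfl
      intro i _; ring
    rw [heq]
    apply mul_le_mul_of_nonneg_left _ (by positivity)
    have := geom_sum_Ico_le_of_lt_one hε0 (by linarith : ε < 1) (m := 0) (n := n-1)
    rw [← Finset.range_eq_Ico] at this
    simp only [pow_zero] at this
    calc ∑ i ∈ Finset.range (n-1), ε^i ≤ 1 / (1 - ε) := this
      _ ≤ 3/2 := by
        rw [div_le_iff₀ (by linarith)]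
        linarith
  -- final arithmetic
  have hu : ε * s ≤ 0.736 := by
    have h1 : ε * s ≤ 2 / (Real.exp 1 * s) * s := mul_le_mul_of_nonneg_right hεle hs0.le
    have h2 : 2 / (Real.exp 1 * s) * s = 2 / Real.exp 1 := by field_simp
    have h3 : 2 / Real.exp 1 ≤ 0.736 := by
      rw [div_le_iff₀ (Real.exp_pos 1)]; linarith
    rw [h2] at h1; linarith
  have hinv : (1:ℝ) / n = 1 / s^2 := by rw [hs2]
  have hsinv : 1/s ≤ 0.45 := by
    rw [div_le_iff₀ hs0]; linarith
  have key : ε + 1/(n:ℝ) + ε^2 * (3/2) < δ := by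
    have hmain : ε + 1/s^2 + ε^2 * (3/2) < 2/s := by
      rw [lt_div_iff₀ hs0]
      have expand : (ε + 1/s^2 + ε^2*(3/2)) * s = ε*s + 1/s + (3/2)*((ε*s)*ε) := by
        field_simp
      rw [expand]
      have hprod : (ε*s)*ε ≤ 0.736 * (1/3) :=
        mul_le_mul hu (le_of_lt hε3) hε0 (by norm_num)
      linarith
    rw [hinv]
    linarith
  calc 1 - ε - (1-ε)^n - ∑ i ∈ Finset.range (n-1), ε^(i+2)
      ≥ 1 - ε - 1/n - ε^2 * (3/2) := by
        have := hpow
        linarith [hsum]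
    _ > 1 - δ := by linarith [key]
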